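/- If x maximizes |xᴴy|²/‖x‖² over a codebook that is a full Cartesian product C = X^T of a finite constellation X ⊂ ℂ, and λ^opt = 1/h^opt is the reciprocal of the GLRT channel estimate, then each coordinate satisfies x_t = argmin_{a ∈ X} |λ^opt·y_t - a|; i.e., the optimal codeword is the elementwise nearest neighbor of λ^opt·y. -/

import Mathlib

lemma sq_ident (h s : ℂ) (n : ℝ) :
    Complex.normSq (h * n - s) =
      ‖h‖ ^ 2 * n ^ 2 - 2 * n * ((starRingEnd ℂ) h * s).re + ‖s‖ ^ 2 := by
  simp only [Complex.sq_norm, Complex.normSq_apply, Complex.mul_re, Complex.mul_im,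
    Complex.sub_re, Complex.sub_im, Complex.conj_re, Complex.conj_im,
    Complex.ofReal_re, Complex.ofReal_im]
  ring

lemma expand_sum {T : ℕ} (y z : Fin T → ℂ) (h : ℂ) :
    ∑ t, ‖y t - h * z t‖ ^ 2 =
      ∑ t, ‖y t‖ ^ 2
        - 2 * ((starRingEnd ℂ) h * ∑ t, (starRingEnd ℂ) (z t) * y t).re
        + ‖h‖ ^ 2 * ∑ t, ‖z t‖ ^ 2 := by
  have hterm : ∀ u : Fin T, ‖y u - h * z u‖ ^ 2 =
      ‖y u‖ ^ 2 - 2 * ((starRingEnd ℂ) h * ((starRingEnd ℂ) (z u) * y u)).re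
        + ‖h‖ ^ 2 * ‖z u‖ ^ 2 := by
    intro u
    simp only [Complex.sq_norm, Complex.normSq_apply, Complex.mul_re, Complex.mul_im,
      Complex.sub_re, Complex.sub_im, Complex.conj_re, Complex.conj_im]
    ring
  rw [Finset.sum_congr rfl fun u _ => hterm u]
  rw [Finset.sum_add_distrib, Finset.sum_sub_distrib, ← Finset.mul_sum,
    show ((starRingEnd ℂ) h * ∑ t, (starRingEnd ℂ) (z t) * y t).re
        = ∑ t, ((starRingEnd ℂ) h * ((starRingEnd ℂ) (z t) * y t)).re from by
      rw [Finset.mul_sum, Complex.re_sum],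
    Finset.mul_sum, Finset.mul_sum Finset.univ (fun u => ‖z u‖ ^ 2) (‖h‖ ^ 2)]

lemma complete_sq (h s : ℂ) {n : ℝ} (hn : 0 < n) :
    -(‖s‖ ^ 2 / n) ≤ -(2 * ((starRingEnd ℂ) h * s).re) + ‖h‖ ^ 2 * n := by
  have h0 : 0 ≤ Complex.normSq (h * n - s) := Complex.normSq_nonneg _
  rw [sq_ident] at h0
  rw [← neg_div, div_le_iff₀ hn]
  nlinarith [h0]

/-- If `x` maximizes `|xᴴy|²/‖x‖²` over the full Cartesian-product codebook
`C = X^T` of a finite constellation `X ⊂ ℂ \ {0}`, and `λopt = 1/hopt` is the reciprocal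
of the (nonzero) GLRT channel estimate `hopt = xᴴy/‖x‖²`, then each coordinate satisfies
`x_t = argmin_{a ∈ X} |λopt·y_t - a|`. -/
theorem stmt11 {T : ℕ} (X : Finset ℂ) (hXne : X.Nonempty) (hX0 : (0 : ℂ) ∉ X)
    (y x : Fin T → ℂ) (hx : ∀ t, x t ∈ X)
    (hmax : ∀ z : Fin T → ℂ, (∀ t, z t ∈ X) →
      ‖∑ t, (starRingEnd ℂ) (z t) * y t‖ ^ 2 / (∑ t, ‖z t‖ ^ 2) ≤
      ‖∑ t, (starRingEnd ℂ) (x t) * y t‖ ^ 2 / (∑ t, ‖x t‖ ^ 2))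
    (hopt : ℂ)
    (hh : hopt = (∑ t, (starRingEnd ℂ) (x t) * y t) / ((∑ t, ‖x t‖ ^ 2 : ℝ) : ℂ))
    (hne : hopt ≠ 0) :
    ∀ t, ∀ a ∈ X, ‖hopt⁻¹ * y t - x t‖ ≤ ‖hopt⁻¹ * y t - a‖ := by
  intro t a ha
  set s : ℂ := ∑ u, (starRingEnd ℂ) (x u) * y u with hs
  set n : ℝ := ∑ u, ‖x u‖ ^ 2 with hn
  have hnne : n ≠ 0 := by
    intro h0
    rw [hh, h0] at hne
    simp at hne
  have hnpos : 0 < n :=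
    lt_of_le_of_ne (Finset.sum_nonneg fun u _ => by positivity) (Ne.symm hnne)
  have hnC : (n : ℂ) ≠ 0 := Complex.ofReal_ne_zero.mpr hnne
  have hsx : hopt * (n : ℂ) = s := by
    rw [hh]; field_simp
  -- value of the objective at x
  have habs : ‖hopt‖ = ‖s‖ / n := by
    rw [hh, norm_div, Complex.norm_real, Real.norm_of_nonneg hnpos.le]
  have hre : ((starRingEnd ℂ) hopt * s).re = ‖hopt‖ ^ 2 * n := by
    rw [← hsx, show (starRingEnd ℂ) hopt * (hopt * (n:ℂ)) = ((Complex.normSq hopt : ℝ) : ℂ) * (n:ℂ) from by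
      rw [← Complex.mul_conj]; ring]
    rw [← Complex.ofReal_mul, Complex.ofReal_re, Complex.sq_norm]
  have hEx : ∑ u, ‖y u - hopt * x u‖ ^ 2
      = ∑ u, ‖y u‖ ^ 2 - ‖s‖ ^ 2 / n := by
    rw [expand_sum, hre, ← hn, habs]
    field_simp
    ring
  -- the perturbed codeword
  set z : Fin T → ℂ := Function.update x t a with hzdef
  have hzX : ∀ u, z u ∈ X := by
    intro u
    rcases eq_or_ne u t with rfl | hu
    · simpa [hzdef] using ha
    · simpa [hzdef, Function.update_of_ne hu] using hx u
  have hNz : (0 : ℝ) < ∑ u, ‖z u‖ ^ 2 := by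
    have hT : (Finset.univ : Finset (Fin T)).Nonempty := ⟨t, Finset.mem_univ t⟩
    refine Finset.sum_pos (fun u _ => ?_) hT
    have hz0 : z u ≠ 0 := fun h0 => hX0 (h0 ▸ hzX u)
    exact pow_pos (norm_pos_iff.mpr hz0) 2
  -- key inequality: E(z, hopt) ≥ E(x, hopt)
  have hkey : ∑ u, ‖y u - hopt * x u‖ ^ 2
      ≤ ∑ u, ‖y u - hopt * z u‖ ^ 2 := by
    rw [hEx, expand_sum]
    have h1 := complete_sq hopt (∑ u, (starRingEnd ℂ) (z u) * y u) hNz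
    have h2 := hmax z hzX
    have h3 : ‖∑ u, (starRingEnd ℂ) (z u) * y u‖ ^ 2 / (∑ u, ‖z u‖ ^ 2)
        ≤ ‖s‖ ^ 2 / n := h2
    linarith
  -- reduce to the single coordinate t
  have hsingle : ‖y t - hopt * x t‖ ^ 2 ≤ ‖y t - hopt * z t‖ ^ 2 := by
    have hsplit : ∀ w : Fin T → ℂ, ∑ u, ‖y u - hopt * w u‖ ^ 2
        = ‖y t - hopt * w t‖ ^ 2
          + ∑ u ∈ Finset.univ.erase t, ‖y u - hopt * w u‖ ^ 2 := by
      intro w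
      exact (Finset.add_sum_erase _ _ (Finset.mem_univ t)).symm
    rw [hsplit x, hsplit z] at hkey
    have heq : ∑ u ∈ Finset.univ.erase t, ‖y u - hopt * x u‖ ^ 2
        = ∑ u ∈ Finset.univ.erase t, ‖y u - hopt * z u‖ ^ 2 := by
      refine Finset.sum_congr rfl fun u hu => ?_
      rw [hzdef, Function.update_of_ne (Finset.ne_of_mem_erase hu)]
    linarith
  have habsle : ‖y t - hopt * x t‖ ≤ ‖y t - hopt * a‖ := by
    have := hsingle
    rw [hzdef, Function.update_self] at this
    nlinarith [norm_nonneg (y t - hopt * x t), norm_nonneg (y t - hopt * a)]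
  have hrw : ∀ b : ℂ, hopt⁻¹ * y t - b = hopt⁻¹ * (y t - hopt * b) := by
    intro b; field_simp
  rw [hrw (x t), hrw a, norm_mul, norm_mul]
  exact mul_le_mul_of_nonneg_left habsle (norm_nonneg _)
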